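/- Let (H,J) be a Krein space, S a pseudo-regular subspace with S = M [∔] S° for a regular subspace M, and Q₁, Q₂ ∈ Q_S two J-normal projections with range S and R(QᵢQᵢ^#) = M for i = 1, 2. Then there exists U ∈ U_J with U(M) = M and U(S°) = S° such that Q₂ = U Q₁ U^#; i.e., the group U_{M,S°} = {U ∈ U_J : U(M) = M, U(S°) = S°} acts transitively on Q_{S,M} = {Q ∈ Q_S : R(QQ^#) = M}. -/

import Mathlib

open ContinuousLinearMap

variable {H : Type*} [NormedAddCommGroup H] [InnerProductSpace ℂ H] [CompleteSpace H]

/-- The `J`-adjoint `T^# = J T* J`. -/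
noncomputable def sharp (J T : H →L[ℂ] H) : H →L[ℂ] H :=
  J ∘L (ContinuousLinearMap.adjoint T) ∘L J

/-- The `J`-orthogonal companion `S^{[⊥]} = {f : [g,f] = 0 ∀ g ∈ S}` where `[g,f] = ⟪J g, f⟫`. -/
def jperp (J : H →L[ℂ] H) (S : Submodule ℂ H) : Submodule ℂ H where
  carrier := {f | ∀ g ∈ S, (inner ℂ (J g) f : ℂ) = 0}
  add_mem' := by
    intro a b ha hb g hg
    rw [inner_add_right, ha g hg, hb g hg, add_zero]
  zero_mem' := by
    intro g hg
    simp
  smul_mem' := by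
    intro c a ha g hg
    rw [inner_smul_right, ha g hg, mul_zero]

/-- A (closed) subspace `M` is regular if `M [∔] M^{[⊥]} = H`. -/
def KreinRegular (J : H →L[ℂ] H) (M : Submodule ℂ H) : Prop :=
  IsClosed (M : Set H) ∧ M ⊔ jperp J M = ⊤ ∧ M ⊓ jperp J M = ⊥

/-- A closed subspace `S` is pseudo-regular if `S = M [∔] S°` for some regular subspace `M`,
where `S° = S ⊓ S^{[⊥]}` is the isotropic part. -/
def KreinPseudoRegular (J : H →L[ℂ] H) (S : Submodule ℂ H) : Prop :=
  IsClosed (S : Set H) ∧ ∃ M : Submodule ℂ H, KreinRegular J M ∧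
    M ⊔ (S ⊓ jperp J S) = S ∧ M ⊓ (S ⊓ jperp J S) = ⊥

section SharpLemmas

variable (J : H →L[ℂ] H)

theorem sharp_mul (hJ2 : J ∘L J = 1) (A B : H →L[ℂ] H) :
    sharp J (A * B) = sharp J B * sharp J A := by
  simp only [sharp, mul_def, adjoint_comp, comp_assoc]
  rw [show J.comp ((ContinuousLinearMap.adjoint B).comp
      ((ContinuousLinearMap.adjoint A).comp J))
      = J.comp ((ContinuousLinearMap.adjoint B).comp
        ((J.comp J).comp ((ContinuousLinearMap.adjoint A).comp J))) by
    rw [hJ2, one_def, id_comp]]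
  simp only [comp_assoc]

theorem sharp_sharp (hJsa : ContinuousLinearMap.adjoint J = J) (hJ2 : J ∘L J = 1)
    (A : H →L[ℂ] H) : sharp J (sharp J A) = A := by
  simp only [sharp, adjoint_comp, adjoint_adjoint, hJsa, comp_assoc]
  rw [hJ2, one_def, comp_id, ← comp_assoc, hJ2, one_def, id_comp]

theorem sharp_one (hJ2 : J ∘L J = 1) : sharp J 1 = 1 := by
  simp only [sharp, one_def, adjoint_id, comp_id, id_comp]
  rw [← one_def, ← hJ2]

theorem sharp_add (A B : H →L[ℂ] H) : sharp J (A + B) = sharp J A + sharp J B := by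
  simp only [sharp, map_add, add_comp, comp_add]

theorem sharp_sub (A B : H →L[ℂ] H) : sharp J (A - B) = sharp J A - sharp J B := by
  simp only [sharp, map_sub, sub_comp, comp_sub]

/-- `[A x, y] = [x, A^# y]`. -/
theorem sharp_inner (hJsa : ContinuousLinearMap.adjoint J = J) (hJ2 : J ∘L J = 1)
    (A : H →L[ℂ] H) (x y : H) :
    (inner ℂ (J (A x)) y : ℂ) = inner ℂ (J x) ((sharp J A) y) := by
  have hJJ : ∀ z : H, J (J z) = z := by
    intro z
    have := ContinuousLinearMap.ext_iff.mp hJ2 z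
    simpa using this
  have hs : (sharp J A) y = J ((ContinuousLinearMap.adjoint A) (J y)) := rfl
  calc (inner ℂ (J (A x)) y : ℂ)
      = inner ℂ ((ContinuousLinearMap.adjoint J) (A x)) y := by rw [hJsa]
    _ = inner ℂ (A x) (J y) := adjoint_inner_left J y (A x)
    _ = inner ℂ x ((ContinuousLinearMap.adjoint A) (J y)) :=
        (adjoint_inner_right A x (J y)).symm
    _ = inner ℂ (J (J x)) ((ContinuousLinearMap.adjoint A) (J y)) := by rw [hJJ x]
    _ = inner ℂ ((ContinuousLinearMap.adjoint J) (J x))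
        ((ContinuousLinearMap.adjoint A) (J y)) := by rw [hJsa]
    _ = inner ℂ (J x) (J ((ContinuousLinearMap.adjoint A) (J y))) :=
        adjoint_inner_left J _ (J x)
    _ = inner ℂ (J x) ((sharp J A) y) := by rw [hs]

end SharpLemmas

/-- The group `U_{M,S°}` acts transitively on `Q_{S,M}`: given two `J`-normal projections with
range `S` whose regular parts both have range `M`, some `J`-unitary preserving `M` and `S°`
conjugates one into the other. -/
theorem stmt19 (J : H →L[ℂ] H)
    (hJsa : ContinuousLinearMap.adjoint J = J) (hJ2 : J ∘L J = 1)
    (S M : Submodule ℂ H) (hSc : IsClosed (S : Set H))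
    (hM : KreinRegular J M)
    (hsup : M ⊔ (S ⊓ jperp J S) = S) (hinf : M ⊓ (S ⊓ jperp J S) = ⊥)
    (Q₁ Q₂ : H →L[ℂ] H)
    (hQ₁ : Q₁ ∘L Q₁ = Q₁) (hQ₁n : Q₁ ∘L sharp J Q₁ = sharp J Q₁ ∘L Q₁)
    (hQ₁S : LinearMap.range (Q₁ : H →ₗ[ℂ] H) = S) (hQ₁M : LinearMap.range ((Q₁ ∘L sharp J Q₁ : H →L[ℂ] H) : H →ₗ[ℂ] H) = M)
    (hQ₂ : Q₂ ∘L Q₂ = Q₂) (hQ₂n : Q₂ ∘L sharp J Q₂ = sharp J Q₂ ∘L Q₂)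
    (hQ₂S : LinearMap.range (Q₂ : H →ₗ[ℂ] H) = S) (hQ₂M : LinearMap.range ((Q₂ ∘L sharp J Q₂ : H →L[ℂ] H) : H →ₗ[ℂ] H) = M) :
    ∃ U : H →L[ℂ] H, U ∘L sharp J U = 1 ∧ sharp J U ∘L U = 1 ∧
      Submodule.map (U : H →ₗ[ℂ] H) M = M ∧
      Submodule.map (U : H →ₗ[ℂ] H) (S ⊓ jperp J S) = S ⊓ jperp J S ∧
      Q₂ = U ∘L Q₁ ∘L sharp J U := by
  have hJJ : ∀ z : H, J (J z) = z := by
    intro z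
    have := ContinuousLinearMap.ext_iff.mp hJ2 z
    simpa using this
  simp only [← mul_def] at hQ₁ hQ₁n hQ₂ hQ₂n hQ₁M hQ₂M
  set P₁ := sharp J Q₁ with hP₁
  set P₂ := sharp J Q₂ with hP₂
  have hsP₁ : sharp J P₁ = Q₁ := by rw [hP₁]; exact sharp_sharp J hJsa hJ2 Q₁
  have hsP₂ : sharp J P₂ = Q₂ := by rw [hP₂]; exact sharp_sharp J hJsa hJ2 Q₂
  have m1 : Q₁ * Q₁ = Q₁ := hQ₁
  have m2 : Q₂ * Q₂ = Q₂ := hQ₂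
  have hfix1 : ∀ x ∈ S, Q₁ x = x := by
    intro x hx
    rw [← hQ₁S] at hx
    obtain ⟨w, rfl⟩ := hx
    have := ContinuousLinearMap.ext_iff.mp m1 w
    simpa [mul_apply] using this
  have hfix2 : ∀ x ∈ S, Q₂ x = x := by
    intro x hx
    rw [← hQ₂S] at hx
    obtain ⟨w, rfl⟩ := hx
    have := ContinuousLinearMap.ext_iff.mp m2 w
    simpa [mul_apply] using this
  have m3 : Q₂ * Q₁ = Q₁ := by
    ext x
    rw [ContinuousLinearMap.mul_apply]
    exact hfix2 (Q₁ x) (hQ₁S ▸ LinearMap.mem_range_self _ x)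
  have m4 : Q₁ * Q₂ = Q₂ := by
    ext x
    rw [ContinuousLinearMap.mul_apply]
    exact hfix1 (Q₂ x) (hQ₂S ▸ LinearMap.mem_range_self _ x)
  have p1 : P₁ * P₁ = P₁ := by
    have := congrArg (sharp J) m1
    rwa [sharp_mul J hJ2, ← hP₁] at this
  have p2 : P₂ * P₂ = P₂ := by
    have := congrArg (sharp J) m2
    rwa [sharp_mul J hJ2, ← hP₂] at this
  have p3 : P₁ * P₂ = P₁ := by
    have := congrArg (sharp J) m3
    rwa [sharp_mul J hJ2, ← hP₁, ← hP₂] at this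
  have p4 : P₂ * P₁ = P₂ := by
    have := congrArg (sharp J) m4
    rwa [sharp_mul J hJ2, ← hP₁, ← hP₂] at this
  set E := Q₁ * P₁ with hE
  set E₂ := Q₂ * P₂ with hE₂
  -- after `set`, hQ₁n : E = P₁ * Q₁ and hQ₂n : E₂ = P₂ * Q₂
  have pn1 : P₁ * Q₁ = E := hQ₁n.symm
  have pn2 : P₂ * Q₂ = E₂ := hQ₂n.symm
  have hEsa : sharp J E = E := by
    rw [hE, sharp_mul J hJ2, hsP₁, hP₁]
  have hE₂sa : sharp J E₂ = E₂ := by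
    rw [hE₂, sharp_mul J hJ2, hsP₂, hP₂]
  have hEidem : E * E = E := by
    rw [hE]
    calc Q₁ * P₁ * (Q₁ * P₁) = Q₁ * ((P₁ * Q₁) * P₁) := by noncomm_ring
    _ = Q₁ * (E * P₁) := by rw [pn1]
    _ = Q₁ * ((Q₁ * P₁) * P₁) := by rw [hE]
    _ = (Q₁ * Q₁) * (P₁ * P₁) := by noncomm_ring
    _ = Q₁ * P₁ := by rw [m1, p1]
  have hE₂idem : E₂ * E₂ = E₂ := by
    rw [hE₂]
    calc Q₂ * P₂ * (Q₂ * P₂) = Q₂ * ((P₂ * Q₂) * P₂) := by noncomm_ring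
    _ = Q₂ * (E₂ * P₂) := by rw [pn2]
    _ = Q₂ * ((Q₂ * P₂) * P₂) := by rw [hE₂]
    _ = (Q₂ * Q₂) * (P₂ * P₂) := by noncomm_ring
    _ = Q₂ * P₂ := by rw [m2, p2]
  have hEfix : ∀ m ∈ M, E m = m := by
    intro m hm
    rw [← hQ₁M] at hm
    obtain ⟨w, rfl⟩ := hm
    have := ContinuousLinearMap.ext_iff.mp hEidem w
    simpa [mul_apply] using this
  have hE₂fix : ∀ m ∈ M, E₂ m = m := by
    intro m hm
    rw [← hQ₂M] at hm
    obtain ⟨w, rfl⟩ := hm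
    have := ContinuousLinearMap.ext_iff.mp hE₂idem w
    simpa [mul_apply] using this
  -- kernel lemma: if x is J-orthogonal to M then R x = 0 for R J-selfadjoint with range M
  have hker : ∀ (R : H →L[ℂ] H), sharp J R = R → LinearMap.range (R : H →ₗ[ℂ] H) = M →
      ∀ x : H, (∀ m ∈ M, (inner ℂ (J m) x : ℂ) = 0) → R x = 0 := by
    intro R hRsa hRM x hx
    have h1 : ∀ y : H, (inner ℂ (J y) (R x) : ℂ) = 0 := by
      intro y
      have h2 := sharp_inner J hJsa hJ2 R y x
      rw [hRsa] at h2
      rw [← h2]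
      exact hx (R y) (hRM ▸ LinearMap.mem_range_self _ y)
    have h3 := h1 (J (R x))
    rw [hJJ (R x)] at h3
    exact inner_self_eq_zero.mp h3
  -- the crucial identity E₂ = E
  have hE₂E : E₂ = E := by
    ext x
    have hx : ∀ m ∈ M, (inner ℂ (J m) (x - E x) : ℂ) = 0 := by
      intro m hm
      rw [← hQ₁M] at hm
      obtain ⟨w, rfl⟩ := hm
      have h2 := sharp_inner J hJsa hJ2 E w (x - E x)
      rw [hEsa] at h2
      rw [ContinuousLinearMap.coe_coe, h2]
      have hz : E (x - E x) = 0 := by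
        rw [map_sub]
        have := ContinuousLinearMap.ext_iff.mp hEidem x
        rw [ContinuousLinearMap.mul_apply] at this
        rw [this, sub_self]
      rw [hz, inner_zero_right]
    have hz : E₂ (x - E x) = 0 := hker E₂ hE₂sa hQ₂M _ hx
    have hEXM : E x ∈ M := hQ₁M ▸ LinearMap.mem_range_self _ x
    calc E₂ x = E₂ (E x + (x - E x)) := by rw [add_sub_cancel]
    _ = E₂ (E x) + E₂ (x - E x) := by rw [map_add]
    _ = E x + 0 := by rw [hE₂fix (E x) hEXM, hz]
    _ = E x := by rw [add_zero]
  have n1 : Q₁ * P₁ = E := hE.symm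
  have n2 : P₁ * Q₁ = E := pn1
  have n3 : Q₂ * P₂ = E := hE₂.symm.trans hE₂E
  have n4 : P₂ * Q₂ = E := pn2.trans hE₂E
  -- absorption by E
  have e1 : Q₁ * E = E := by
    conv_lhs => rw [hE, ← mul_assoc, m1]
  have e2 : E * Q₁ = E := by
    conv_lhs => rw [hE, mul_assoc, n2, e1]
  have e3 : Q₂ * E = E := by
    conv_lhs => rw [← n3, ← mul_assoc, m2]
    exact n3
  have e4 : E * Q₂ = E := by
    conv_lhs => rw [← n3, mul_assoc, n4, e3]
  have e6 : E * P₁ = E := by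
    conv_lhs => rw [hE, mul_assoc, p1]
  have e5 : P₁ * E = E := by
    conv_lhs => rw [hE, ← mul_assoc, n2, e6]
  have e8 : E * P₂ = E := by
    conv_lhs => rw [← n3, mul_assoc, p2]
    exact n3
  have e7 : P₂ * E = E := by
    conv_lhs => rw [← n3, ← mul_assoc, n4, e8]
  have e9 : E * E = E := hEidem
  have n5 : P₁ * Q₂ = E := by rw [← m4, ← mul_assoc, n2, e4]
  have n6 : P₂ * Q₁ = E := by rw [← m3, ← mul_assoc, n4, e2]
  set A := Q₂ * P₁ with hA
  set B := Q₁ * P₂ with hB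
  have na : Q₂ * P₁ = A := hA.symm
  have nb : Q₁ * P₂ = B := hB.symm
  have hsA : sharp J A = B := by
    rw [hA, sharp_mul J hJ2, hsP₁, ← hP₂]
  have a1 : Q₁ * A = A := by rw [hA, ← mul_assoc, m4]
  have a2 : Q₂ * A = A := by rw [hA, ← mul_assoc, m2]
  have a3 : P₁ * A = E := by rw [hA, ← mul_assoc, n5, e6]
  have a4 : P₂ * A = E := by rw [hA, ← mul_assoc, n4, e6]
  have a5 : A * Q₁ = E := by rw [hA, mul_assoc, n2, e3]
  have a6 : A * Q₂ = E := by rw [hA, mul_assoc, n5, e3]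
  have a7 : A * P₁ = A := by rw [hA, mul_assoc, p1]
  have a8 : A * P₂ = A := by rw [hA, mul_assoc, p3]
  have a9 : A * E = E := by rw [hA, mul_assoc, e5, e3]
  have a10 : E * A = E := by rw [hA, ← mul_assoc, e4, e6]
  have b1 : Q₁ * B = B := by rw [hB, ← mul_assoc, m1]
  have b2 : Q₂ * B = B := by rw [hB, ← mul_assoc, m3]
  have b3 : P₁ * B = E := by rw [hB, ← mul_assoc, n2, e8]
  have b4 : P₂ * B = E := by rw [hB, ← mul_assoc, n6, e8]
  have b5 : B * Q₁ = E := by rw [hB, mul_assoc, n6, e1]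
  have b6 : B * Q₂ = E := by rw [hB, mul_assoc, n4, e1]
  have b7 : B * P₁ = B := by rw [hB, mul_assoc, p4]
  have b8 : B * P₂ = B := by rw [hB, mul_assoc, p2]
  have b9 : B * E = E := by rw [hB, mul_assoc, e7, e1]
  have b10 : E * B = E := by rw [hB, ← mul_assoc, e2, e8]
  have ab : A * B = E := by rw [hB, ← mul_assoc, a5, e8]
  have ba : B * A = E := by rw [hA, ← mul_assoc, b6, e6]
  -- the J-unitary
  set U : H →L[ℂ] H := 1 + Q₁ - Q₂ - P₁ + P₂ + A - E with hU
  have hsU : sharp J U = 1 + P₁ - P₂ - Q₁ + Q₂ + B - E := by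
    rw [hU]
    simp only [sharp_add J, sharp_sub J]
    rw [sharp_one J hJ2, hsA, hEsa, hsP₁, hsP₂]
  have hUU : U * sharp J U = 1 := by
    rw [hsU, hU]
    simp only [mul_add, add_mul, mul_sub, sub_mul, mul_one, one_mul,
      m1, m2, m3, m4, p1, p2, p3, p4, n1, n2, n3, n4, n5, n6,
      e1, e2, e3, e4, e5, e6, e7, e8, e9, na, nb,
      a1, a2, a3, a4, a5, a6, a7, a8, a9, a10,
      b1, b2, b3, b4, b5, b6, b7, b8, b9, b10, ab, ba]
    abel
  have hUU' : sharp J U * U = 1 := by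
    rw [hsU, hU]
    simp only [mul_add, add_mul, mul_sub, sub_mul, mul_one, one_mul,
      m1, m2, m3, m4, p1, p2, p3, p4, n1, n2, n3, n4, n5, n6,
      e1, e2, e3, e4, e5, e6, e7, e8, e9, na, nb,
      a1, a2, a3, a4, a5, a6, a7, a8, a9, a10,
      b1, b2, b3, b4, b5, b6, b7, b8, b9, b10, ab, ba]
    abel
  -- U fixes M pointwise
  have hUfixM : ∀ m ∈ M, U m = m := by
    intro m hm
    have hEm : E m = m := hEfix m hm
    have happ : ∀ T : H →L[ℂ] H, T * E = E → T m = m := by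
      intro T hT
      conv_lhs => rw [← hEm, ← ContinuousLinearMap.mul_apply, hT]
      exact hEm
    have h1 : Q₁ m = m := happ Q₁ e1
    have h2 : Q₂ m = m := happ Q₂ e3
    have h3 : P₁ m = m := happ P₁ e5
    have h4 : P₂ m = m := happ P₂ e7
    have h5 : A m = m := happ A a9
    rw [hU]
    simp only [add_apply, sub_apply, one_apply, h1, h2, h3, h4, h5, hEm]
    abel
  -- U fixes S° pointwise
  have hMS : M ≤ S := hsup ▸ le_sup_left
  have hUfixS0 : ∀ s ∈ S ⊓ jperp J S, U s = s := by
    intro s hs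
    obtain ⟨hs1, hs2⟩ := hs
    have hs2' : ∀ g ∈ S, (inner ℂ (J g) s : ℂ) = 0 := hs2
    have hq1 : Q₁ s = s := hfix1 s hs1
    have hq2 : Q₂ s = s := hfix2 s hs1
    have hEs : E s = 0 := by
      refine hker E hEsa hQ₁M s ?_
      intro m hm
      exact hs2' m (hMS hm)
    have hp1 : P₁ s = 0 := by
      conv_lhs => rw [← hq1, ← ContinuousLinearMap.mul_apply, n2]
      exact hEs
    have hp2 : P₂ s = 0 := by
      conv_lhs => rw [← hq2, ← ContinuousLinearMap.mul_apply, n4]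
      exact hEs
    have ha : A s = 0 := by
      conv_lhs => rw [← hq1, ← ContinuousLinearMap.mul_apply, a5]
      exact hEs
    rw [hU]
    simp only [add_apply, sub_apply, one_apply, hq1, hq2, hp1, hp2, ha, hEs]
    abel
  refine ⟨U, by rw [← mul_def]; exact hUU, by rw [← mul_def]; exact hUU', ?_, ?_, ?_⟩
  · ext x
    constructor
    · rintro ⟨m, hm, rfl⟩
      rw [ContinuousLinearMap.coe_coe, hUfixM m hm]
      exact hm
    · intro hx
      exact ⟨x, hx, hUfixM x hx⟩
  · ext x
    constructor
    · rintro ⟨s, hs, rfl⟩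
      rw [ContinuousLinearMap.coe_coe, hUfixS0 s hs]
      exact hs
    · intro hx
      exact ⟨x, hx, hUfixS0 x hx⟩
  · -- Q₂ = U Q₁ U^#
    have h1 : Q₁ * sharp J U = Q₂ := by
      rw [hsU]
      simp only [mul_add, mul_sub, mul_one, m1, m4, n1, nb, b1, e1]
      abel
    have h2 : U * Q₂ = Q₂ := by
      rw [hU]
      simp only [add_mul, sub_mul, one_mul, m2, m4, n4, n5, a6, e4]
      abel
    calc Q₂ = U * Q₂ := h2.symm
    _ = U * (Q₁ * sharp J U) := by rw [h1]
    _ = U ∘L Q₁ ∘L sharp J U := by simp only [mul_def]
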